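/- Let all preferences in P be substitutable and satisfy the law of aggregate demand, let μ and μ̃ be stable matchings with μ ≻_F μ̃, and let μ' be a cyclic matching under the reduced preference profile P^{μ,μ̃} (i.e. μ' = μ_σ for some cycle σ for P^{μ,μ̃}). Then μ' is a stable matching under P^{μ,μ̃}, i.e. μ' ∈ S(P^{μ,μ̃}). -/

import Mathlib

open Finset

noncomputable section

open scoped Classical

/-- `C` is a choice function: `C S ⊆ S` for every `S`. -/
def IsChoiceFun {α : Type*} (C : Finset α → Finset α) : Prop := ∀ S, C S ⊆ S

/-- Substitutability of a choice function: if `b` is chosen from `S`, then `b` is chosen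
from `S' ∪ {b}` for every `S' ⊆ S`. -/
def Substitutable {α : Type*} [DecidableEq α] (C : Finset α → Finset α) : Prop :=
  ∀ (S S' : Finset α) (b : α), S' ⊆ S → b ∈ C S → b ∈ C (insert b S')

/-- The law of aggregate demand for a choice function. -/
def LAD {α : Type*} (C : Finset α → Finset α) : Prop :=
  ∀ S' S : Finset α, S' ⊆ S → (C S').card ≤ (C S).card

/-- The most `u`-preferred subset of `S` among the members of the family `A` of acceptable
sets (the empty set is always available as a fallback). -/
def bestIn {α : Type*} (u : Finset α → ℕ) (A : Set (Finset α)) (S : Finset α) : Finset α := by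
  classical
  have h : ∃ T ∈ (S.powerset).filter (fun T => T ∈ A ∨ T = ∅),
      ∀ T' ∈ (S.powerset).filter (fun T => T ∈ A ∨ T = ∅), u T' ≤ u T :=
    Finset.exists_max_image _ u ⟨∅, by simp⟩
  exact h.choose

/-- A many-to-many matching market: each firm `f` has a strict preference over subsets
of workers, represented by an injective utility `uF f`, and symmetrically for workers. -/
structure Market (F W : Type*) where
  uF : F → Finset W → ℕ
  uW : W → Finset F → ℕ
  injF : ∀ f, Function.Injective (uF f)
  injW : ∀ w, Function.Injective (uW w)

/-- A many-to-many matching. -/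
structure Matching (F W : Type*) where
  fm : F → Finset W
  wm : W → Finset F
  consistent : ∀ f w, w ∈ fm f ↔ f ∈ wm w

namespace Market

variable {F W : Type*} [DecidableEq F] [DecidableEq W]

/-- The choice set of firm `f` under the original preference: the most preferred
subset among the acceptable subsets (those strictly preferred to `∅`). -/
def Cf (M : Market F W) (f : F) : Finset W → Finset W :=
  bestIn (M.uF f) {T | M.uF f ∅ < M.uF f T}

/-- The choice set of worker `w` under the original preference. -/
def Cw (M : Market F W) (w : W) : Finset F → Finset F :=
  bestIn (M.uW w) {T | M.uW w ∅ < M.uW w T}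

/-- Individual rationality under the original profile. -/
def IR (M : Market F W) (μ : Matching F W) : Prop :=
  (∀ f, M.Cf f (μ.fm f) = μ.fm f) ∧ (∀ w, M.Cw w (μ.wm w) = μ.wm w)

/-- `(f,w)` blocks `μ` under the original profile. -/
def Blocks (M : Market F W) (μ : Matching F W) (f : F) (w : W) : Prop :=
  w ∉ μ.fm f ∧ w ∈ M.Cf f (insert w (μ.fm f)) ∧ f ∈ M.Cw w (insert f (μ.wm w))

/-- Stability under the original profile. -/
def Stable (M : Market F W) (μ : Matching F W) : Prop :=
  M.IR μ ∧ ∀ f w, ¬ M.Blocks μ f w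

/-- Blair's partial order for firm `f`: `S ⪰_f S'` iff `C_f (S ∪ S') = S`. -/
def blairF (M : Market F W) (f : F) (S S' : Finset W) : Prop := M.Cf f (S ∪ S') = S

/-- Blair's partial order for worker `w`. -/
def blairW (M : Market F W) (w : W) (S S' : Finset F) : Prop := M.Cw w (S ∪ S') = S

/-- The unanimous Blair order for the firms' side: `μ ⪰_F μ'`. -/
def geF (M : Market F W) (μ μ' : Matching F W) : Prop := ∀ f, M.blairF f (μ.fm f) (μ'.fm f)

/-- The unanimous Blair order for the workers' side: `μ ⪰_W μ'`. -/
def geW (M : Market F W) (μ μ' : Matching F W) : Prop := ∀ w, M.blairW w (μ.wm w) (μ'.wm w)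

/-- Strict unanimous Blair order for the firms' side: `μ ≻_F μ'`. -/
def gtF (M : Market F W) (μ μ' : Matching F W) : Prop := M.geF μ μ' ∧ μ ≠ μ'

/-- Workers deleted from `f`'s list in Step 1(a) of the reduction procedure:
those belonging to some `W' ≻_f μ(f)` but not to `μ(f)`. -/
def D1 (M : Market F W) (μ : Matching F W) (f : F) : Set W :=
  {x | ∃ W' : Finset W, (M.Cf f (W' ∪ μ.fm f) = W' ∧ W' ≠ μ.fm f) ∧ x ∈ W' ∧ x ∉ μ.fm f}

/-- Workers deleted from `f`'s list in Step 2(a): those belonging to some `W'` with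
`μ̃(f) ≻_f W'` but not to `μ̃(f)`. -/
def D2 (M : Market F W) (μt : Matching F W) (f : F) : Set W :=
  {x | ∃ W' : Finset W, (M.Cf f (μt.fm f ∪ W') = μt.fm f ∧ μt.fm f ≠ W') ∧ x ∈ W' ∧ x ∉ μt.fm f}

/-- Firms deleted from `w`'s list in Step 1(b). -/
def E1 (M : Market F W) (μt : Matching F W) (w : W) : Set F :=
  {x | ∃ F' : Finset F, (M.Cw w (F' ∪ μt.wm w) = F' ∧ F' ≠ μt.wm w) ∧ x ∈ F' ∧ x ∉ μt.wm w}

/-- Firms deleted from `w`'s list in Step 2(b). -/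
def E2 (M : Market F W) (μ : Matching F W) (w : W) : Set F :=
  {x | ∃ F' : Finset F, (M.Cw w (μ.wm w ∪ F') = μ.wm w ∧ μ.wm w ≠ F') ∧ x ∈ F' ∧ x ∉ μ.wm w}

/-- Workers deleted from `f`'s list in Step 3: those workers `w` for which `{f}` is no
longer on `w`'s list after Steps 1 and 2 (either `{f}` was never acceptable to `w`, or
`f` was deleted from `w`'s list in Step 1(b) or 2(b)). -/
def D3 (M : Market F W) (μ μt : Matching F W) (f : F) : Set W :=
  {w | ¬ (M.uW w ∅ < M.uW w {f}) ∨ f ∈ M.E1 μt w ∪ M.E2 μ w}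

/-- Firms deleted from `w`'s list in Step 3. -/
def E3 (M : Market F W) (μ μt : Matching F W) (w : W) : Set F :=
  {f | ¬ (M.uF f ∅ < M.uF f {w}) ∨ w ∈ M.D1 μ f ∪ M.D2 μt f}

/-- All workers deleted from `f`'s list in the reduction procedure. -/
def Dall (M : Market F W) (μ μt : Matching F W) (f : F) : Set W :=
  M.D1 μ f ∪ M.D2 μt f ∪ M.D3 μ μt f

/-- All firms deleted from `w`'s list in the reduction procedure. -/
def Eall (M : Market F W) (μ μt : Matching F W) (w : W) : Set F :=
  M.E1 μt w ∪ M.E2 μ w ∪ M.E3 μ μt w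

/-- The family of sets surviving in `f`'s list under the reduced profile `P^{μ,μ̃}`:
originally acceptable sets containing no deleted worker. -/
def RAf (M : Market F W) (μ μt : Matching F W) (f : F) : Set (Finset W) :=
  {T | M.uF f ∅ < M.uF f T ∧ ∀ x ∈ T, x ∉ M.Dall μ μt f}

/-- The family of sets surviving in `w`'s list under the reduced profile `P^{μ,μ̃}`. -/
def RAw (M : Market F W) (μ μt : Matching F W) (w : W) : Set (Finset F) :=
  {T | M.uW w ∅ < M.uW w T ∧ ∀ x ∈ T, x ∉ M.Eall μ μt w}

/-- The choice set `C^{μ,μ̃}_f` of firm `f` under the reduced profile. -/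
def Cfred (M : Market F W) (μ μt : Matching F W) (f : F) : Finset W → Finset W :=
  bestIn (M.uF f) (M.RAf μ μt f)

/-- The choice set `C^{μ,μ̃}_w` of worker `w` under the reduced profile. -/
def Cwred (M : Market F W) (μ μt : Matching F W) (w : W) : Finset F → Finset F :=
  bestIn (M.uW w) (M.RAw μ μt w)

/-- Individual rationality under the reduced profile `P^{μ,μ̃}`. -/
def IRred (M : Market F W) (μ μt ν : Matching F W) : Prop :=
  (∀ f, M.Cfred μ μt f (ν.fm f) = ν.fm f) ∧ (∀ w, M.Cwred μ μt w (ν.wm w) = ν.wm w)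

/-- Blocking under the reduced profile `P^{μ,μ̃}`. -/
def Blocksred (M : Market F W) (μ μt ν : Matching F W) (f : F) (w : W) : Prop :=
  w ∉ ν.fm f ∧ w ∈ M.Cfred μ μt f (insert w (ν.fm f)) ∧
    f ∈ M.Cwred μ μt w (insert f (ν.wm w))

/-- Stability under the reduced profile `P^{μ,μ̃}`. -/
def Stablered (M : Market F W) (μ μt ν : Matching F W) : Prop :=
  M.IRred μ μt ν ∧ ∀ f w, ¬ M.Blocksred μ μt ν f w

/-- The unanimous Blair order on the firms' side computed with the reduced choice sets. -/
def geFred (M : Market F W) (μ μt ν ν' : Matching F W) : Prop :=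
  ∀ f, M.Cfred μ μt f (ν.fm f ∪ ν'.fm f) = ν.fm f

/-- The unanimous Blair order on the workers' side computed with the reduced choice sets. -/
def geWred (M : Market F W) (μ μt ν ν' : Matching F W) : Prop :=
  ∀ w, M.Cwred μ μt w (ν.wm w ∪ ν'.wm w) = ν.wm w

/-- All preferences in the market are substitutable. -/
def SubstAll (M : Market F W) : Prop :=
  (∀ f, Substitutable (M.Cf f)) ∧ (∀ w, Substitutable (M.Cw w))

/-- All preferences in the market satisfy the law of aggregate demand. -/
def LADAll (M : Market F W) : Prop :=
  (∀ f, LAD (M.Cf f)) ∧ (∀ w, LAD (M.Cw w))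

/-- A cycle for the reduced profile `P^{μ,μ̃}`: an `r`-periodic sequence of worker-firm
pairs `(w_i, f_i)` (indexed cyclically) such that (i) `w_i ∈ μ(f_i) \ μ̃(f_i)`;
(ii) `C^{μ,μ̃}_{f_i}(W \ {w_i}) = (μ(f_i) \ {w_i}) ∪ {w_{i+1}}`; and (iii)
`C^{μ,μ̃}_{w_{i+1}}(μ(w_{i+1}) ∪ {f_i}) = (μ(w_{i+1}) \ {f_{i+1}}) ∪ {f_i}`. -/
def IsCycle [Fintype W] (M : Market F W) (μ μt : Matching F W) (r : ℕ)
    (w : ℕ → W) (f : ℕ → F) : Prop :=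
  0 < r ∧ (∀ i, w (i + r) = w i) ∧ (∀ i, f (i + r) = f i) ∧
  ∀ i, (w i ∈ μ.fm (f i) ∧ w i ∉ μt.fm (f i)) ∧
    M.Cfred μ μt (f i) (Finset.univ \ {w i}) = insert (w (i + 1)) (μ.fm (f i) \ {w i}) ∧
    M.Cwred μ μt (w (i + 1)) (μ.wm (w (i + 1)) ∪ {f i}) =
      insert (f i) (μ.wm (w (i + 1)) \ {f (i + 1)})

/-- The firm-side assignment of the cyclic matching `μ_σ` obtained from the cycle
`σ = (w, f)` of length `r`. -/
def cyclicFm (μ : Matching F W) (r : ℕ) (w : ℕ → W) (f : ℕ → F) (g : F) : Finset W :=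
  if ∃ i ∈ Finset.range r, f i = g then
    (μ.fm g \ ((Finset.range r).filter (fun i => f i = g)).image w) ∪
      ((Finset.range r).filter (fun i => f i = g)).image (fun i => w (i + 1))
  else μ.fm g

/-- `ν` is a cyclic matching under the reduced profile `P^{μ,μ̃}`: `ν = μ_σ` for some
cycle `σ` for `P^{μ,μ̃}` (the worker side of `ν` is determined by consistency). -/
def IsCyclicMatching [Fintype W] (M : Market F W) (μ μt ν : Matching F W) : Prop :=
  ∃ (r : ℕ) (w : ℕ → W) (f : ℕ → F),
    M.IsCycle μ μt r w f ∧ ∀ g, ν.fm g = cyclicFm μ r w f g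

end Market
section AuxBestIn

variable {α : Type*}

theorem bestIn_spec (u : Finset α → ℕ) (A : Set (Finset α)) (S : Finset α) :
    (bestIn u A S ⊆ S ∧ (bestIn u A S ∈ A ∨ bestIn u A S = ∅)) ∧
      ∀ T ⊆ S, (T ∈ A ∨ T = ∅) → u T ≤ u (bestIn u A S) := by
  have h : ∃ T ∈ (S.powerset).filter (fun T => T ∈ A ∨ T = ∅),
      ∀ T' ∈ (S.powerset).filter (fun T => T ∈ A ∨ T = ∅), u T' ≤ u T :=
    Finset.exists_max_image _ u ⟨∅, by simp⟩
  obtain ⟨hmem, hmax⟩ := h.choose_spec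
  have hb : bestIn u A S = h.choose := rfl
  rw [Finset.mem_filter, Finset.mem_powerset] at hmem
  refine ⟨⟨by rw [hb]; exact hmem.1, by rw [hb]; exact hmem.2⟩, ?_⟩
  intro T hT hA
  rw [hb]
  exact hmax T (by rw [Finset.mem_filter, Finset.mem_powerset]; exact ⟨hT, hA⟩)

theorem bestIn_subset (u : Finset α → ℕ) (A : Set (Finset α)) (S : Finset α) :
    bestIn u A S ⊆ S := (bestIn_spec u A S).1.1

theorem bestIn_acc (u : Finset α → ℕ) (A : Set (Finset α)) (S : Finset α) :
    bestIn u A S ∈ A ∨ bestIn u A S = ∅ := (bestIn_spec u A S).1.2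

theorem bestIn_le (u : Finset α → ℕ) (A : Set (Finset α)) {S T : Finset α}
    (hT : T ⊆ S) (hA : T ∈ A ∨ T = ∅) : u T ≤ u (bestIn u A S) :=
  (bestIn_spec u A S).2 T hT hA

theorem bestIn_eq (u : Finset α → ℕ) (hu : Function.Injective u) (A : Set (Finset α))
    {S T : Finset α} (hT : T ⊆ S) (hA : T ∈ A ∨ T = ∅)
    (hmax : ∀ T' ⊆ S, (T' ∈ A ∨ T' = ∅) → u T' ≤ u T) : bestIn u A S = T :=
  hu (le_antisymm (hmax _ (bestIn_subset u A S) (bestIn_acc u A S)) (bestIn_le u A hT hA))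

theorem bestIn_irc (u : Finset α → ℕ) (hu : Function.Injective u) (A : Set (Finset α))
    {S T : Finset α} (h1 : bestIn u A S ⊆ T) (h2 : T ⊆ S) :
    bestIn u A T = bestIn u A S :=
  bestIn_eq u hu A h1 (bestIn_acc u A S)
    (fun T' hT' hA' => bestIn_le u A (hT'.trans h2) hA')

end AuxBestIn
set_option linter.unusedSectionVars false
set_option linter.unusedVariables false

section AuxChoice

variable {α : Type*}

theorem choice_mem_of_mem [DecidableEq α] {C : Finset α → Finset α} (hs : Substitutable C)
    {S T : Finset α} {b : α} (hb : b ∈ C S) (hTS : T ⊆ S) (hbT : b ∈ T) : b ∈ C T := by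
  have h := hs S (T.erase b) b (fun x hx => hTS (Finset.mem_of_mem_erase hx)) hb
  rwa [Finset.insert_erase hbT] at h

theorem bestIn_pi [DecidableEq α] (u : Finset α → ℕ) (hu : Function.Injective u)
    (A : Set (Finset α)) (hs : Substitutable (bestIn u A)) (S T : Finset α) :
    bestIn u A (S ∪ T) = bestIn u A (S ∪ bestIn u A T) := by
  have h1 : bestIn u A (S ∪ T) ⊆ S ∪ bestIn u A T := by
    intro x hx
    by_cases hxS : x ∈ S
    · exact Finset.mem_union_left _ hxS
    · have hxT : x ∈ T := by
        rcases Finset.mem_union.1 (bestIn_subset u A _ hx) with h | h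
        · exact absurd h hxS
        · exact h
      exact Finset.mem_union_right _
        (choice_mem_of_mem hs hx Finset.subset_union_right hxT)
  exact (bestIn_irc u hu A h1
    (Finset.union_subset Finset.subset_union_left
      ((bestIn_subset u A T).trans Finset.subset_union_right))).symm

end AuxChoice

section AuxMarket

variable {F W : Type*} [DecidableEq F] [DecidableEq W]
variable (M : Market F W)

theorem Cf_subset (f : F) (S : Finset W) : M.Cf f S ⊆ S := bestIn_subset _ _ _
theorem Cw_subset (w : W) (S : Finset F) : M.Cw w S ⊆ S := bestIn_subset _ _ _

theorem Cf_irc {f : F} {S T : Finset W} (h1 : M.Cf f S ⊆ T) (h2 : T ⊆ S) :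
    M.Cf f T = M.Cf f S := bestIn_irc _ (M.injF f) _ h1 h2
theorem Cw_irc {w : W} {S T : Finset F} (h1 : M.Cw w S ⊆ T) (h2 : T ⊆ S) :
    M.Cw w T = M.Cw w S := bestIn_irc _ (M.injW w) _ h1 h2

theorem Cf_pi (f : F) (hs : Substitutable (M.Cf f)) (S T : Finset W) :
    M.Cf f (S ∪ T) = M.Cf f (S ∪ M.Cf f T) := bestIn_pi _ (M.injF f) _ hs S T
theorem Cw_pi (w : W) (hs : Substitutable (M.Cw w)) (S T : Finset F) :
    M.Cw w (S ∪ T) = M.Cw w (S ∪ M.Cw w T) := bestIn_pi _ (M.injW w) _ hs S T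

theorem singleAcc_f {f : F} (hs : Substitutable (M.Cf f)) {S : Finset W}
    (hIR : M.Cf f S = S) {x : W} (hx : x ∈ S) : M.uF f ∅ < M.uF f {x} := by
  have h1 : x ∈ M.Cf f {x} :=
    choice_mem_of_mem hs (by rw [hIR]; exact hx) (Finset.singleton_subset_iff.2 hx)
      (Finset.mem_singleton_self x)
  have h2 : M.Cf f {x} = {x} :=
    Finset.Subset.antisymm (Cf_subset M f _) (Finset.singleton_subset_iff.2 h1)
  have h3 : M.Cf f {x} ∈ {T | M.uF f ∅ < M.uF f T} ∨ M.Cf f {x} = ∅ := bestIn_acc _ _ _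
  rcases h3 with h | h
  · rwa [h2] at h
  · rw [h2] at h; exact absurd h (by simp)

theorem singleAcc_w {w : W} (hs : Substitutable (M.Cw w)) {S : Finset F}
    (hIR : M.Cw w S = S) {x : F} (hx : x ∈ S) : M.uW w ∅ < M.uW w {x} := by
  have h1 : x ∈ M.Cw w {x} :=
    choice_mem_of_mem hs (by rw [hIR]; exact hx) (Finset.singleton_subset_iff.2 hx)
      (Finset.mem_singleton_self x)
  have h2 : M.Cw w {x} = {x} :=
    Finset.Subset.antisymm (Cw_subset M w _) (Finset.singleton_subset_iff.2 h1)
  have h3 : M.Cw w {x} ∈ {T | M.uW w ∅ < M.uW w T} ∨ M.Cw w {x} = ∅ := bestIn_acc _ _ _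
  rcases h3 with h | h
  · rwa [h2] at h
  · rw [h2] at h; exact absurd h (by simp)

/-- Decomposition lemma: `μ ⪰_F μ̃` implies `μ̃ ⪰_W μ`. -/
theorem decomp (hsub : M.SubstAll) {μ μt : Matching F W} (hμt : M.Stable μt)
    (hge : M.geF μ μt) (v : W) : M.Cw v (μ.wm v ∪ μt.wm v) = μt.wm v := by
  have hK : M.Cw v (μ.wm v ∪ μt.wm v) ⊆ μt.wm v := by
    intro h hh
    by_contra hht
    have hhμ : h ∈ μ.wm v := by
      rcases Finset.mem_union.1 (Cw_subset M v _ hh) with h1 | h1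
      · exact h1
      · exact absurd h1 hht
    refine hμt.2 h v ⟨?_, ?_, ?_⟩
    · rw [μt.consistent]; exact hht
    · have h2 : v ∈ M.Cf h (μ.fm h ∪ μt.fm h) := by
        rw [hge h]; exact (μ.consistent h v).2 hhμ
      exact choice_mem_of_mem (hsub.1 h) h2
        (Finset.insert_subset_iff.2
          ⟨Finset.mem_union_left _ ((μ.consistent h v).2 hhμ), Finset.subset_union_right⟩)
        (Finset.mem_insert_self _ _)
    · exact choice_mem_of_mem (hsub.2 v) hh
        (Finset.insert_subset_iff.2
          ⟨Finset.mem_union_left _ hhμ, Finset.subset_union_right⟩)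
        (Finset.mem_insert_self _ _)
  have h2 : M.Cw v (μt.wm v) = M.Cw v (μ.wm v ∪ μt.wm v) :=
    Cw_irc M hK Finset.subset_union_right
  rw [← h2]; exact hμt.1.2 v

end AuxMarket
section AuxMarket2

variable {F W : Type*} [DecidableEq F] [DecidableEq W]
variable (M : Market F W) {μ μt : Matching F W}

/-- Partners of `μ` or `μt` are never deleted from a firm's list. -/
theorem F1D (hsub : M.SubstAll) (hμ : M.Stable μ) (hμt : M.Stable μt) (hgt : M.gtF μ μt)
    (f : F) (x : W) (hx : x ∈ μ.fm f ∪ μt.fm f) : x ∉ M.Dall μ μt f := by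
  intro hE
  rw [Finset.mem_union] at hx
  simp only [Market.Dall, Set.mem_union] at hE
  rcases hE with (h | h) | h
  · -- D1
    simp only [Market.D1, Set.mem_setOf_eq] at h
    obtain ⟨W', ⟨hC, hne⟩, hx1, hx2⟩ := h
    have hxt : x ∈ μt.fm f := by rcases hx with h' | h'; exact absurd h' hx2; exact h'
    refine hμ.2 f x ⟨hx2, ?_, ?_⟩
    · have h2 : x ∈ M.Cf f (W' ∪ μ.fm f) := by rw [hC]; exact hx1
      exact choice_mem_of_mem (hsub.1 f) h2
        (Finset.insert_subset_iff.2 ⟨Finset.mem_union_left _ hx1, Finset.subset_union_right⟩)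
        (Finset.mem_insert_self _ _)
    · have h3 : f ∈ M.Cw x (μ.wm x ∪ μt.wm x) := by
        rw [decomp M hsub hμt hgt.1 x]; exact (μt.consistent f x).1 hxt
      exact choice_mem_of_mem (hsub.2 x) h3
        (Finset.insert_subset_iff.2 ⟨Finset.mem_union_right _ ((μt.consistent f x).1 hxt),
          Finset.subset_union_left⟩) (Finset.mem_insert_self _ _)
  · -- D2
    simp only [Market.D2, Set.mem_setOf_eq] at h
    obtain ⟨W', ⟨hC, hne⟩, hx1, hx2⟩ := h
    have hxμ : x ∈ μ.fm f := by rcases hx with h' | h'; exact h'; exact absurd h' hx2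
    have hpi : M.Cf f (μ.fm f ∪ (μt.fm f ∪ W')) = M.Cf f (μ.fm f ∪ M.Cf f (μt.fm f ∪ W')) :=
      Cf_pi M f (hsub.1 f) _ _
    rw [hC] at hpi
    have hbig : M.Cf f (μ.fm f ∪ (μt.fm f ∪ W')) = μ.fm f := by rw [hpi]; exact hgt.1 f
    have h4 : x ∈ M.Cf f (μ.fm f ∪ (μt.fm f ∪ W')) := by rw [hbig]; exact hxμ
    have h5 : x ∈ M.Cf f (μt.fm f ∪ W') :=
      choice_mem_of_mem (hsub.1 f) h4 Finset.subset_union_right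
        (Finset.mem_union_right _ hx1)
    rw [hC] at h5
    exact hx2 h5
  · -- D3
    simp only [Market.D3, Set.mem_setOf_eq] at h
    rcases h with h | h
    · refine h ?_
      rcases hx with h' | h'
      · exact singleAcc_w M (hsub.2 x) (hμ.1.2 x) ((μ.consistent f x).1 h')
      · exact singleAcc_w M (hsub.2 x) (hμt.1.2 x) ((μt.consistent f x).1 h')
    · rcases h with h | h
      · -- f ∈ E1 μt x
        simp only [Market.E1, Set.mem_setOf_eq] at h
        obtain ⟨F', ⟨hC, hne⟩, hf1, hf2⟩ := h
        have hxμ : x ∈ μ.fm f := by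
          rcases hx with h' | h'; exact h'
          exact absurd ((μt.consistent f x).1 h') hf2
        refine hμt.2 f x ⟨fun hc => hf2 ((μt.consistent f x).1 hc), ?_, ?_⟩
        · have h2 : x ∈ M.Cf f (μ.fm f ∪ μt.fm f) := by rw [hgt.1 f]; exact hxμ
          exact choice_mem_of_mem (hsub.1 f) h2
            (Finset.insert_subset_iff.2 ⟨Finset.mem_union_left _ hxμ,
              Finset.subset_union_right⟩) (Finset.mem_insert_self _ _)
        · have h3 : f ∈ M.Cw x (F' ∪ μt.wm x) := by rw [hC]; exact hf1
          exact choice_mem_of_mem (hsub.2 x) h3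
            (Finset.insert_subset_iff.2 ⟨Finset.mem_union_left _ hf1,
              Finset.subset_union_right⟩) (Finset.mem_insert_self _ _)
      · -- f ∈ E2 μ x
        simp only [Market.E2, Set.mem_setOf_eq] at h
        obtain ⟨F', ⟨hC, hne⟩, hf1, hf2⟩ := h
        have hxt : x ∈ μt.fm f := by
          rcases hx with h' | h'
          · exact absurd ((μ.consistent f x).1 h') hf2
          · exact h'
        have hpi : M.Cw x (μt.wm x ∪ (μ.wm x ∪ F')) = M.Cw x (μt.wm x ∪ M.Cw x (μ.wm x ∪ F')) :=
          Cw_pi M x (hsub.2 x) _ _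
        rw [hC] at hpi
        have hbig : M.Cw x (μt.wm x ∪ (μ.wm x ∪ F')) = μt.wm x := by
          rw [hpi, Finset.union_comm (μt.wm x)]; exact decomp M hsub hμt hgt.1 x
        have h4 : f ∈ M.Cw x (μt.wm x ∪ (μ.wm x ∪ F')) := by
          rw [hbig]; exact (μt.consistent f x).1 hxt
        have h5 : f ∈ M.Cw x (μ.wm x ∪ F') :=
          choice_mem_of_mem (hsub.2 x) h4 Finset.subset_union_right
            (Finset.mem_union_right _ hf1)
        rw [hC] at h5
        exact hf2 h5

/-- Partners of `μ` or `μt` are never deleted from a worker's list. -/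
theorem F1E (hsub : M.SubstAll) (hμ : M.Stable μ) (hμt : M.Stable μt) (hgt : M.gtF μ μt)
    (w : W) (x : F) (hx : x ∈ μ.wm w ∪ μt.wm w) : x ∉ M.Eall μ μt w := by
  intro hE
  rw [Finset.mem_union] at hx
  simp only [Market.Eall, Set.mem_union] at hE
  rcases hE with (h | h) | h
  · -- E1
    simp only [Market.E1, Set.mem_setOf_eq] at h
    obtain ⟨F', ⟨hC, hne⟩, hx1, hx2⟩ := h
    have hxμ : x ∈ μ.wm w := by rcases hx with h' | h'; exact h'; exact absurd h' hx2
    refine hμt.2 x w ⟨fun hc => hx2 ((μt.consistent x w).1 hc), ?_, ?_⟩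
    · have h2 : w ∈ M.Cf x (μ.fm x ∪ μt.fm x) := by
        rw [hgt.1 x]; exact (μ.consistent x w).2 hxμ
      exact choice_mem_of_mem (hsub.1 x) h2
        (Finset.insert_subset_iff.2 ⟨Finset.mem_union_left _ ((μ.consistent x w).2 hxμ),
          Finset.subset_union_right⟩) (Finset.mem_insert_self _ _)
    · have h3 : x ∈ M.Cw w (F' ∪ μt.wm w) := by rw [hC]; exact hx1
      exact choice_mem_of_mem (hsub.2 w) h3
        (Finset.insert_subset_iff.2 ⟨Finset.mem_union_left _ hx1,
          Finset.subset_union_right⟩) (Finset.mem_insert_self _ _)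
  · -- E2
    simp only [Market.E2, Set.mem_setOf_eq] at h
    obtain ⟨F', ⟨hC, hne⟩, hx1, hx2⟩ := h
    have hxt : x ∈ μt.wm w := by rcases hx with h' | h'; exact absurd h' hx2; exact h'
    have hpi : M.Cw w (μt.wm w ∪ (μ.wm w ∪ F')) = M.Cw w (μt.wm w ∪ M.Cw w (μ.wm w ∪ F')) :=
      Cw_pi M w (hsub.2 w) _ _
    rw [hC] at hpi
    have hbig : M.Cw w (μt.wm w ∪ (μ.wm w ∪ F')) = μt.wm w := by
      rw [hpi, Finset.union_comm (μt.wm w)]; exact decomp M hsub hμt hgt.1 w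
    have h4 : x ∈ M.Cw w (μt.wm w ∪ (μ.wm w ∪ F')) := by rw [hbig]; exact hxt
    have h5 : x ∈ M.Cw w (μ.wm w ∪ F') :=
      choice_mem_of_mem (hsub.2 w) h4 Finset.subset_union_right
        (Finset.mem_union_right _ hx1)
    rw [hC] at h5
    exact hx2 h5
  · -- E3
    simp only [Market.E3, Set.mem_setOf_eq] at h
    rcases h with h | h
    · refine h ?_
      rcases hx with h' | h'
      · exact singleAcc_f M (hsub.1 x) (hμ.1.1 x) ((μ.consistent x w).2 h')
      · exact singleAcc_f M (hsub.1 x) (hμt.1.1 x) ((μt.consistent x w).2 h')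
    · rcases h with h | h
      · -- w ∈ D1 μ x
        simp only [Market.D1, Set.mem_setOf_eq] at h
        obtain ⟨W', ⟨hC, hne⟩, hw1, hw2⟩ := h
        have hxt : x ∈ μt.wm w := by
          rcases hx with h' | h'
          · exact absurd ((μ.consistent x w).2 h') hw2
          · exact h'
        refine hμ.2 x w ⟨hw2, ?_, ?_⟩
        · have h2 : w ∈ M.Cf x (W' ∪ μ.fm x) := by rw [hC]; exact hw1
          exact choice_mem_of_mem (hsub.1 x) h2
            (Finset.insert_subset_iff.2 ⟨Finset.mem_union_left _ hw1,
              Finset.subset_union_right⟩) (Finset.mem_insert_self _ _)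
        · have h3 : x ∈ M.Cw w (μ.wm w ∪ μt.wm w) := by
            rw [decomp M hsub hμt hgt.1 w]; exact hxt
          exact choice_mem_of_mem (hsub.2 w) h3
            (Finset.insert_subset_iff.2 ⟨Finset.mem_union_right _ hxt,
              Finset.subset_union_left⟩) (Finset.mem_insert_self _ _)
      · -- w ∈ D2 μt x
        simp only [Market.D2, Set.mem_setOf_eq] at h
        obtain ⟨W', ⟨hC, hne⟩, hw1, hw2⟩ := h
        have hxμ : x ∈ μ.wm w := by
          rcases hx with h' | h'
          · exact h'
          · exact absurd ((μt.consistent x w).2 h') hw2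
        have hpi : M.Cf x (μ.fm x ∪ (μt.fm x ∪ W')) = M.Cf x (μ.fm x ∪ M.Cf x (μt.fm x ∪ W')) :=
          Cf_pi M x (hsub.1 x) _ _
        rw [hC] at hpi
        have hbig : M.Cf x (μ.fm x ∪ (μt.fm x ∪ W')) = μ.fm x := by rw [hpi]; exact hgt.1 x
        have h4 : w ∈ M.Cf x (μ.fm x ∪ (μt.fm x ∪ W')) := by
          rw [hbig]; exact (μ.consistent x w).2 hxμ
        have h5 : w ∈ M.Cf x (μt.fm x ∪ W') :=
          choice_mem_of_mem (hsub.1 x) h4 Finset.subset_union_right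
            (Finset.mem_union_right _ hw1)
        rw [hC] at h5
        exact hw2 h5

end AuxMarket2
section AuxMarket3

variable {F W : Type*} [DecidableEq F] [DecidableEq W]
variable (M : Market F W) {μ μt : Matching F W}

theorem Cfred_eq (f : F) (S : Finset W) :
    M.Cfred μ μt f S = M.Cf f (S.filter (fun x => x ∉ M.Dall μ μt f)) := by
  refine bestIn_eq (M.uF f) (M.injF f) (M.RAf μ μt f)
    ((Cf_subset M f _).trans (Finset.filter_subset _ _)) ?_ ?_
  · rcases bestIn_acc (M.uF f) {T | M.uF f ∅ < M.uF f T}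
      (S.filter (fun x => x ∉ M.Dall μ μt f)) with h | h
    · exact Or.inl ⟨h, fun x hx => (Finset.mem_filter.1 ((Cf_subset M f _) hx)).2⟩
    · exact Or.inr h
  · intro T hT hA
    rcases hA with hA | hA
    · exact bestIn_le (M.uF f) _
        (fun x hx => Finset.mem_filter.2 ⟨hT hx, hA.2 x hx⟩) (Or.inl hA.1)
    · subst hA
      exact bestIn_le (M.uF f) _ (Finset.empty_subset _) (Or.inr rfl)

theorem Cwred_eq (w : W) (S : Finset F) :
    M.Cwred μ μt w S = M.Cw w (S.filter (fun x => x ∉ M.Eall μ μt w)) := by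
  refine bestIn_eq (M.uW w) (M.injW w) (M.RAw μ μt w)
    ((Cw_subset M w _).trans (Finset.filter_subset _ _)) ?_ ?_
  · rcases bestIn_acc (M.uW w) {T | M.uW w ∅ < M.uW w T}
      (S.filter (fun x => x ∉ M.Eall μ μt w)) with h | h
    · exact Or.inl ⟨h, fun x hx => (Finset.mem_filter.1 ((Cw_subset M w _) hx)).2⟩
    · exact Or.inr h
  · intro T hT hA
    rcases hA with hA | hA
    · exact bestIn_le (M.uW w) _
        (fun x hx => Finset.mem_filter.2 ⟨hT hx, hA.2 x hx⟩) (Or.inl hA.1)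
    · subst hA
      exact bestIn_le (M.uW w) _ (Finset.empty_subset _) (Or.inr rfl)

theorem substred_f (f : F) (hs : Substitutable (M.Cf f)) :
    Substitutable (M.Cfred μ μt f) := by
  intro S S' b hS hb
  rw [Cfred_eq] at hb ⊢
  have hbm := Finset.mem_filter.1 (Cf_subset M f _ hb)
  have h2 := hs _ _ b (Finset.filter_subset_filter _ hS) hb
  rw [Finset.filter_insert, if_pos hbm.2]
  exact h2

theorem substred_w (w : W) (hs : Substitutable (M.Cw w)) :
    Substitutable (M.Cwred μ μt w) := by
  intro S S' b hS hb
  rw [Cwred_eq] at hb ⊢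
  have hbm := Finset.mem_filter.1 (Cw_subset M w _ hb)
  have h2 := hs _ _ b (Finset.filter_subset_filter _ hS) hb
  rw [Finset.filter_insert, if_pos hbm.2]
  exact h2

theorem ladred_f (f : F) (hl : LAD (M.Cf f)) : LAD (M.Cfred μ μt f) := by
  intro S' S h
  rw [Cfred_eq, Cfred_eq]
  exact hl _ _ (Finset.filter_subset_filter _ h)

theorem ladred_w (w : W) (hl : LAD (M.Cw w)) : LAD (M.Cwred μ μt w) := by
  intro S' S h
  rw [Cwred_eq, Cwred_eq]
  exact hl _ _ (Finset.filter_subset_filter _ h)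

theorem F3red_f (hsub : M.SubstAll) (hμ : M.Stable μ) (hμt : M.Stable μt) (hgt : M.gtF μ μt)
    (f : F) : M.Cfred μ μt f (μ.fm f) = μ.fm f := by
  rw [Cfred_eq]
  have h1 : (μ.fm f).filter (fun x => x ∉ M.Dall μ μt f) = μ.fm f :=
    Finset.filter_eq_self.2
      (fun x hx => F1D M hsub hμ hμt hgt f x (Finset.mem_union_left _ hx))
  rw [h1]; exact hμ.1.1 f

theorem F3red_w (hsub : M.SubstAll) (hμ : M.Stable μ) (hμt : M.Stable μt) (hgt : M.gtF μ μt)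
    (w : W) : M.Cwred μ μt w (μ.wm w) = μ.wm w := by
  rw [Cwred_eq]
  have h1 : (μ.wm w).filter (fun x => x ∉ M.Eall μ μt w) = μ.wm w :=
    Finset.filter_eq_self.2
      (fun x hx => F1E M hsub hμ hμt hgt w x (Finset.mem_union_left _ hx))
  rw [h1]; exact hμ.1.2 w

/-- Under the reduced profile, a firm's choice from any superset of `μ(f)` is `μ(f)`. -/
theorem F2gen (hsub : M.SubstAll) (hμ : M.Stable μ) (hμt : M.Stable μt) (hgt : M.gtF μ μt)
    (f : F) (S : Finset W) (hS : μ.fm f ⊆ S) : M.Cfred μ μt f S = μ.fm f := by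
  set X := M.Cfred μ μt f S with hX
  have hXf : X = M.Cf f (S.filter (fun x => x ∉ M.Dall μ μt f)) := Cfred_eq M f S
  have hμsub : μ.fm f ⊆ S.filter (fun x => x ∉ M.Dall μ μt f) :=
    fun x hx => Finset.mem_filter.2 ⟨hS hx,
      F1D M hsub hμ hμt hgt f x (Finset.mem_union_left _ hx)⟩
  have hXsub : X ⊆ S.filter (fun x => x ∉ M.Dall μ μt f) := by
    rw [hXf]; exact Cf_subset M f _
  have hIRC : M.Cf f (X ∪ μ.fm f) = X := by
    rw [hXf]
    exact Cf_irc M Finset.subset_union_left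
      (Finset.union_subset (Cf_subset M f _) hμsub)
  by_cases hne : X = μ.fm f
  · exact hne
  exfalso
  have hXμ : X ⊆ μ.fm f := by
    intro x hxX
    by_contra hxn
    refine (Finset.mem_filter.1 (hXsub hxX)).2 ?_
    exact Or.inl (Or.inl ⟨X, ⟨hIRC, hne⟩, hxX, hxn⟩)
  have : X = μ.fm f := by
    have h2 : X ∪ μ.fm f = μ.fm f := Finset.union_eq_right.2 hXμ
    rw [h2] at hIRC
    rw [← hIRC]; exact hμ.1.1 f
  exact hne this

/-- Under the reduced profile, a worker's choice from any superset of `μt(w)` is `μt(w)`. -/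
theorem F2gen' (hsub : M.SubstAll) (hμ : M.Stable μ) (hμt : M.Stable μt) (hgt : M.gtF μ μt)
    (w : W) (S : Finset F) (hS : μt.wm w ⊆ S) : M.Cwred μ μt w S = μt.wm w := by
  set X := M.Cwred μ μt w S with hX
  have hXf : X = M.Cw w (S.filter (fun x => x ∉ M.Eall μ μt w)) := Cwred_eq M w S
  have hμsub : μt.wm w ⊆ S.filter (fun x => x ∉ M.Eall μ μt w) :=
    fun x hx => Finset.mem_filter.2 ⟨hS hx,
      F1E M hsub hμ hμt hgt w x (Finset.mem_union_right _ hx)⟩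
  have hXsub : X ⊆ S.filter (fun x => x ∉ M.Eall μ μt w) := by
    rw [hXf]; exact Cw_subset M w _
  have hIRC : M.Cw w (X ∪ μt.wm w) = X := by
    rw [hXf]
    exact Cw_irc M Finset.subset_union_left
      (Finset.union_subset (Cw_subset M w _) hμsub)
  by_cases hne : X = μt.wm w
  · exact hne
  exfalso
  have hXμ : X ⊆ μt.wm w := by
    intro x hxX
    by_contra hxn
    refine (Finset.mem_filter.1 (hXsub hxX)).2 ?_
    exact Or.inl (Or.inl ⟨X, ⟨hIRC, hne⟩, hxX, hxn⟩)
  have : X = μt.wm w := by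
    have h2 : X ∪ μt.wm w = μt.wm w := Finset.union_eq_right.2 hXμ
    rw [h2] at hIRC
    rw [← hIRC]; exact hμt.1.2 w
  exact hne this

end AuxMarket3
section AuxRH

variable {F W : Type*} [DecidableEq F] [DecidableEq W] [Fintype W]
variable (M : Market F W) {μ μt : Matching F W}

theorem double_count (ν : Matching F W) (FS : Finset F) (hFS : ∀ v : W, ν.wm v ⊆ FS) :
    ∑ f ∈ FS, (ν.fm f).card = ∑ v : W, (ν.wm v).card := by
  have h1 : ∀ f : F, (ν.fm f).card = ∑ v : W, if v ∈ ν.fm f then 1 else 0 := by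
    intro f
    rw [← Finset.card_filter]
    congr 1
    ext v
    simp
  have h2 : ∀ v : W, (ν.wm v).card = ∑ f ∈ FS, if f ∈ ν.wm v then 1 else 0 := by
    intro v
    rw [← Finset.card_filter]
    congr 1
    ext g
    simp only [Finset.mem_filter]
    exact ⟨fun h => ⟨hFS v h, h⟩, fun h => h.2⟩
  calc ∑ f ∈ FS, (ν.fm f).card = ∑ f ∈ FS, ∑ v : W, if v ∈ ν.fm f then 1 else 0 := by
        exact Finset.sum_congr rfl (fun f _ => h1 f)
    _ = ∑ v : W, ∑ f ∈ FS, if v ∈ ν.fm f then 1 else 0 := Finset.sum_comm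
    _ = ∑ v : W, ∑ f ∈ FS, if f ∈ ν.wm v then 1 else 0 := by
        refine Finset.sum_congr rfl (fun v _ => Finset.sum_congr rfl (fun f _ => ?_))
        exact if_congr (ν.consistent f v) rfl rfl
    _ = ∑ v : W, (ν.wm v).card := Finset.sum_congr rfl (fun v _ => (h2 v).symm)

/-- Rural hospitals: every firm has the same number of partners in `μ` and `μt`. -/
theorem rural (hsub : M.SubstAll) (hlad : M.LADAll) (hμ : M.Stable μ) (hμt : M.Stable μt)
    (hgt : M.gtF μ μt) : ∀ f : F, (μt.fm f).card = (μ.fm f).card := by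
  classical
  set FS : Finset F := Finset.univ.biUnion (fun v : W => μ.wm v ∪ μt.wm v) with hFSdef
  have hFSμ : ∀ v : W, μ.wm v ⊆ FS := fun v x hx =>
    Finset.mem_biUnion.2 ⟨v, Finset.mem_univ v, Finset.mem_union_left _ hx⟩
  have hFSμt : ∀ v : W, μt.wm v ⊆ FS := fun v x hx =>
    Finset.mem_biUnion.2 ⟨v, Finset.mem_univ v, Finset.mem_union_right _ hx⟩
  have hf : ∀ f : F, (μt.fm f).card ≤ (μ.fm f).card := by
    intro f
    have h := hlad.1 f (μt.fm f) (μ.fm f ∪ μt.fm f) Finset.subset_union_right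
    rwa [hμt.1.1 f, hgt.1 f] at h
  have hw : ∀ v : W, (μ.wm v).card ≤ (μt.wm v).card := by
    intro v
    have h := hlad.2 v (μ.wm v) (μ.wm v ∪ μt.wm v) Finset.subset_union_left
    rwa [hμ.1.2 v, decomp M hsub hμt hgt.1 v] at h
  have e1 := double_count μ FS hFSμ
  have e2 := double_count μt FS hFSμt
  have le1 : ∑ f ∈ FS, (μt.fm f).card ≤ ∑ f ∈ FS, (μ.fm f).card :=
    Finset.sum_le_sum (fun f _ => hf f)
  have le2 : ∑ v : W, (μ.wm v).card ≤ ∑ v : W, (μt.wm v).card :=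
    Finset.sum_le_sum (fun v _ => hw v)
  have heq : ∑ f ∈ FS, (μt.fm f).card = ∑ f ∈ FS, (μ.fm f).card := by omega
  intro f
  by_cases hfFS : f ∈ FS
  · by_contra hne
    have hlt : (μt.fm f).card < (μ.fm f).card := lt_of_le_of_ne (hf f) hne
    have := Finset.sum_lt_sum (fun g (_ : g ∈ FS) => hf g) ⟨f, hfFS, hlt⟩
    omega
  · have h1 : μ.fm f = ∅ := by
      rw [Finset.eq_empty_iff_forall_notMem]
      intro x hx
      exact hfFS (hFSμ x ((μ.consistent f x).1 hx))
    have h2 : μt.fm f = ∅ := by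
      rw [Finset.eq_empty_iff_forall_notMem]
      intro x hx
      exact hfFS (hFSμt x ((μt.consistent f x).1 hx))
    rw [h1, h2]

end AuxRH
section AuxWrap

variable {F W : Type*} [DecidableEq F] [DecidableEq W]
variable (M : Market F W) {μ μt : Matching F W}

theorem Cfred_subset (f : F) (S : Finset W) : M.Cfred μ μt f S ⊆ S := bestIn_subset _ _ _
theorem Cwred_subset (w : W) (S : Finset F) : M.Cwred μ μt w S ⊆ S := bestIn_subset _ _ _

theorem Cfred_irc {f : F} {S T : Finset W} (h1 : M.Cfred μ μt f S ⊆ T) (h2 : T ⊆ S) :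
    M.Cfred μ μt f T = M.Cfred μ μt f S := bestIn_irc _ (M.injF f) _ h1 h2
theorem Cwred_irc {w : W} {S T : Finset F} (h1 : M.Cwred μ μt w S ⊆ T) (h2 : T ⊆ S) :
    M.Cwred μ μt w T = M.Cwred μ μt w S := bestIn_irc _ (M.injW w) _ h1 h2

end AuxWrap

section AuxShift

theorem image_shift_card {P : Type*} [DecidableEq P]
    (r : ℕ) (hr : 0 < r) (n : ℕ → P)
    (hper : ∀ i, n (i + r) = n i)
    (det : ∀ i j, n i = n j → n (i + 1) = n (j + 1)) :
    (∀ i j, n (i + 1) = n (j + 1) → n i = n j) ∧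
      ∀ s : Finset ℕ, s ⊆ Finset.range r →
        (s.image fun i => n (i + 1)).card = (s.image n).card := by
  have hmul : ∀ i k, n (i + k * r) = n i := by
    intro i k
    induction k with
    | zero => simp
    | succ k ih =>
      have h : i + (k + 1) * r = (i + k * r) + r := by ring
      rw [h, hper, ih]
  have hmod : ∀ i, n (i % r) = n i := by
    intro i
    conv_rhs => rw [← Nat.mod_add_div' i r]
    exact (hmul (i % r) (i / r)).symm
  have hψ : ∀ i, (fun x => if h : ∃ j, j < r ∧ n j = x then n (h.choose + 1) else x) (n i)
      = n (i + 1) := by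
    intro i
    have hex : ∃ j, j < r ∧ n j = n i := ⟨i % r, Nat.mod_lt _ hr, hmod i⟩
    simp only [dif_pos hex]
    exact det _ _ hex.choose_spec.2
  set ψ : P → P := fun x => if h : ∃ j, j < r ∧ n j = x then n (h.choose + 1) else x with hψdef
  set N : Finset P := (Finset.range r).image n with hNdef
  have hshift : (Finset.range r).image (fun i => n (i + 1)) = N := by
    apply Finset.Subset.antisymm
    · intro x hx
      obtain ⟨i, hi, rfl⟩ := Finset.mem_image.1 hx
      rw [hNdef]
      exact Finset.mem_image.2 ⟨(i + 1) % r,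
        Finset.mem_range.2 (Nat.mod_lt _ hr), hmod (i + 1)⟩
    · intro x hx
      obtain ⟨i, hi, rfl⟩ := Finset.mem_image.1 hx
      rcases i with _ | k
      · refine Finset.mem_image.2 ⟨r - 1, Finset.mem_range.2 (by omega), ?_⟩
        have h1 : r - 1 + 1 = r := by omega
        rw [h1]
        have h2 := hper 0
        simpa using h2
      · exact Finset.mem_image.2 ⟨k, Finset.mem_range.2 (by have := Finset.mem_range.1 hi; omega), rfl⟩
  have hNim : N.image ψ = N := by
    rw [hNdef, Finset.image_image]
    rw [show (ψ ∘ n) = fun i => ψ (n i) from rfl]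
    calc (Finset.range r).image (fun i => ψ (n i))
        = (Finset.range r).image (fun i => n (i + 1)) :=
          Finset.image_congr (fun i _ => hψ i)
      _ = N := hshift
  have hinj : Set.InjOn ψ ↑N := Finset.injOn_of_card_image_eq (by rw [hNim])
  constructor
  · intro i j h
    have h1 : n (i % r) ∈ N := by
      rw [hNdef]; exact Finset.mem_image.2 ⟨i % r, Finset.mem_range.2 (Nat.mod_lt _ hr), rfl⟩
    have h2 : n (j % r) ∈ N := by
      rw [hNdef]; exact Finset.mem_image.2 ⟨j % r, Finset.mem_range.2 (Nat.mod_lt _ hr), rfl⟩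
    have h3 : ψ (n (i % r)) = ψ (n (j % r)) := by
      rw [hmod i, hmod j]
      calc ψ (n i) = n (i + 1) := hψ i
        _ = n (j + 1) := h
        _ = ψ (n j) := (hψ j).symm
    have h4 := hinj h1 h2 h3
    rw [hmod i, hmod j] at h4
    exact h4
  · intro s hs
    have h1 : s.image (fun i => n (i + 1)) = (s.image n).image ψ := by
      rw [Finset.image_image]
      exact (Finset.image_congr (fun i _ => (hψ i).symm))
    rw [h1]
    apply Finset.card_image_of_injOn
    exact hinj.mono (Finset.coe_subset.2 (Finset.image_subset_image hs))

end AuxShift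
/-- Proposition 2. With substitutable preferences satisfying the law of
aggregate demand, stable matchings `μ ≻_F μ̃`, and `μ'` a cyclic matching under the
reduced profile `P^{μ,μ̃}`, the matching `μ'` is stable under `P^{μ,μ̃}`. -/
theorem cyclic_matching_stable {F W : Type*} [DecidableEq F] [DecidableEq W] [Fintype W]
    (M : Market F W) (hsub : M.SubstAll) (hlad : M.LADAll)
    (μ μt : Matching F W) (hμ : M.Stable μ) (hμt : M.Stable μt) (hgt : M.gtF μ μt)
    (μ' : Matching F W) (hcm : M.IsCyclicMatching μ μt μ') :
    M.Stablered μ μt μ' := by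
  classical
  obtain ⟨r, w, f, ⟨hr, hwper, hfper, hcond⟩, hfm⟩ := hcm
  have hmemf : ∀ i, w i ∈ μ.fm (f i) := fun i => (hcond i).1.1
  have hmemt : ∀ i, w i ∉ μt.fm (f i) := fun i => (hcond i).1.2
  have hii : ∀ i, M.Cfred μ μt (f i) (Finset.univ \ {w i})
      = insert (w (i + 1)) (μ.fm (f i) \ {w i}) := fun i => (hcond i).2.1
  have hiii : ∀ i, M.Cwred μ μt (w (i + 1)) (μ.wm (w (i + 1)) ∪ {f i})
      = insert (f i) (μ.wm (w (i + 1)) \ {f (i + 1)}) := fun i => (hcond i).2.2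
  have hrh := rural M hsub hlad hμ hμt hgt
  -- every step brings a genuinely new worker to the firm
  have hA : ∀ i, w (i + 1) ∉ μ.fm (f i) := by
    intro i hin
    have hwne : w (i + 1) ≠ w i := by
      have h1 : w (i + 1) ∈ M.Cfred μ μt (f i) (Finset.univ \ {w i}) := by
        rw [hii i]; exact Finset.mem_insert_self _ _
      have h2 := Cfred_subset M (f i) _ h1
      rw [Finset.mem_sdiff] at h2
      simpa using h2.2
    have hins : insert (w (i + 1)) (μ.fm (f i) \ {w i}) = μ.fm (f i) \ {w i} :=
      Finset.insert_eq_self.2 (Finset.mem_sdiff.2 ⟨hin, by simpa using hwne⟩)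
    have hcard : (μ.fm (f i)).card ≤ (M.Cfred μ μt (f i) (Finset.univ \ {w i})).card := by
      rw [Cfred_eq]
      have hsubμt : μt.fm (f i) ⊆ (Finset.univ \ {w i}).filter
          (fun x => x ∉ M.Dall μ μt (f i)) := by
        intro x hx
        refine Finset.mem_filter.2 ⟨Finset.mem_sdiff.2 ⟨Finset.mem_univ x, ?_⟩,
          F1D M hsub hμ hμt hgt (f i) x (Finset.mem_union_right _ hx)⟩
        simp only [Finset.mem_singleton]
        intro he; exact hmemt i (he ▸ hx)
      calc (μ.fm (f i)).card = (μt.fm (f i)).card := (hrh (f i)).symm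
        _ = (M.Cf (f i) (μt.fm (f i))).card := by rw [hμt.1.1 (f i)]
        _ ≤ _ := hlad.1 (f i) _ _ hsubμt
    rw [hii i, hins] at hcard
    rw [Finset.card_sdiff_of_subset (Finset.singleton_subset_iff.2 (hmemf i)),
      Finset.card_singleton] at hcard
    have hpos := Finset.card_pos.2 ⟨w i, hmemf i⟩
    omega
  have hA' : ∀ i, f i ∉ μ.wm (w (i + 1)) := fun i hin => hA i ((μ.consistent _ _).2 hin)
  have hfmem1 : ∀ i, f (i + 1) ∈ μ.wm (w (i + 1)) :=
    fun i => (μ.consistent _ _).1 (hmemf (i + 1))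
  -- determinism of the successor pair
  have detW : ∀ i j, w i = w j → f i = f j → w (i + 1) = w (j + 1) := by
    intro i j hww hff
    have h1 := hii i
    rw [hww, hff] at h1
    rw [hii j] at h1
    have h2 : w (i + 1) ∈ insert (w (j + 1)) (μ.fm (f j) \ {w j}) := by
      rw [h1]; exact Finset.mem_insert_self _ _
    rcases Finset.mem_insert.1 h2 with h | h
    · exact h
    · exact absurd (by rw [hff]; exact (Finset.mem_sdiff.1 h).1) (hA i)
  have detF : ∀ i j, f i = f j → w (i + 1) = w (j + 1) → f (i + 1) = f (j + 1) := by
    intro i j hff hww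
    have h1 := hiii i
    rw [hff, hww] at h1
    rw [hiii j] at h1
    have hfj : f j ∉ μ.wm (w (j + 1)) := hA' j
    have h2 : μ.wm (w (j + 1)) \ {f (j + 1)} = μ.wm (w (j + 1)) \ {f (i + 1)} := by
      have e1 : (insert (f j) (μ.wm (w (j + 1)) \ {f (j + 1)})).erase (f j)
          = (insert (f j) (μ.wm (w (j + 1)) \ {f (i + 1)})).erase (f j) := by rw [h1]
      rwa [Finset.erase_insert (fun h => hfj (Finset.mem_sdiff.1 h).1),
        Finset.erase_insert (fun h => hfj (Finset.mem_sdiff.1 h).1)] at e1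
    have hm1 : f (i + 1) ∈ μ.wm (w (j + 1)) := by rw [← hww]; exact hfmem1 i
    have hm2 : f (j + 1) ∈ μ.wm (w (j + 1)) := hfmem1 j
    by_contra hne
    have h3 : f (j + 1) ∈ μ.wm (w (j + 1)) \ {f (i + 1)} :=
      Finset.mem_sdiff.2 ⟨hm2, by simp only [Finset.mem_singleton]; exact fun h => hne h.symm⟩
    rw [← h2] at h3
    exact (Finset.mem_sdiff.1 h3).2 (Finset.mem_singleton_self _)
  have detN : ∀ i j, ((w i, f i) : W × F) = (w j, f j) →
      ((w (i + 1), f (i + 1)) : W × F) = (w (j + 1), f (j + 1)) := by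
    intro i j h
    rw [Prod.mk.injEq] at h ⊢
    have hw' := detW i j h.1 h.2
    exact ⟨hw', detF i j h.2 hw'⟩
  obtain ⟨INJ, CARD⟩ := image_shift_card r hr (fun i => ((w i, f i) : W × F))
    (fun i => by show ((w (i + r), f (i + r)) : W × F) = _; rw [hwper i, hfper i]) detN
  -- periodicity mod r for f
  have hfmul : ∀ i k, f (i + k * r) = f i := by
    intro i k
    induction k with
    | zero => simp
    | succ k ih =>
      have h : i + (k + 1) * r = (i + k * r) + r := by ring
      rw [h, hfper, ih]
  have hfmod : ∀ i, f (i % r) = f i := by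
    intro i
    conv_rhs => rw [← Nat.mod_add_div' i r]
    exact (hfmul (i % r) (i / r)).symm
  -- cycle sets
  set Out : F → Finset W :=
    fun g => ((Finset.range r).filter (fun i => f i = g)).image w with hOut
  set Inn : F → Finset W :=
    fun g => ((Finset.range r).filter (fun i => f i = g)).image (fun i => w (i + 1)) with hInn
  set OutF : W → Finset F :=
    fun v => ((Finset.range r).filter (fun i => w (i + 1) = v)).image (fun i => f (i + 1))
    with hOutF
  set InF : W → Finset F :=
    fun v => ((Finset.range r).filter (fun i => w (i + 1) = v)).image f with hInF
  have hfm1 : ∀ g, (∃ i ∈ Finset.range r, f i = g) →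
      μ'.fm g = (μ.fm g \ Out g) ∪ Inn g := by
    intro g hg
    rw [hfm g]
    simp only [Market.cyclicFm, if_pos hg]
    rfl
  have hfm2 : ∀ g, ¬(∃ i ∈ Finset.range r, f i = g) → μ'.fm g = μ.fm g := by
    intro g hg
    rw [hfm g]
    simp only [Market.cyclicFm, if_neg hg]
  have hOutsub : ∀ g, Out g ⊆ μ.fm g := by
    intro g x hx
    simp only [hOut, Finset.mem_image, Finset.mem_filter] at hx
    obtain ⟨i, ⟨hi, hfi⟩, rfl⟩ := hx
    rw [← hfi]; exact hmemf i
  have hInnμ : ∀ g x, x ∈ Inn g → x ∉ μ.fm g := by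
    intro g x hx
    simp only [hInn, Finset.mem_image, Finset.mem_filter] at hx
    obtain ⟨i, ⟨hi, hfi⟩, rfl⟩ := hx
    rw [← hfi]; exact hA i
  have hOutFsub : ∀ v, OutF v ⊆ μ.wm v := by
    intro v x hx
    simp only [hOutF, Finset.mem_image, Finset.mem_filter] at hx
    obtain ⟨i, ⟨hi, hwi⟩, rfl⟩ := hx
    rw [← hwi]; exact hfmem1 i
  have hInFμ : ∀ v x, x ∈ InF v → x ∉ μ.wm v := by
    intro v x hx
    simp only [hInF, Finset.mem_image, Finset.mem_filter] at hx
    obtain ⟨i, ⟨hi, hwi⟩, rfl⟩ := hx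
    rw [← hwi]; exact hA' i
  -- card equalities via the shift bijection
  have hcardOI : ∀ g, (Out g).card = (Inn g).card := by
    intro g
    set s := (Finset.range r).filter (fun i => f i = g) with hs
    have hsr : s ⊆ Finset.range r := Finset.filter_subset _ _
    have hsf : ∀ i ∈ s, f i = g := fun i hi => (Finset.mem_filter.1 hi).2
    have h1 : (Out g).card = (s.image (fun i => ((w i, f i) : W × F))).card := by
      have he : Out g = (s.image (fun i => ((w i, f i) : W × F))).image Prod.fst := by
        rw [Finset.image_image]; rfl
      rw [he]
      apply Finset.card_image_of_injOn
      intro a ha b hb hab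
      obtain ⟨i, hi, rfl⟩ := Finset.mem_image.1 ha
      obtain ⟨j, hj, rfl⟩ := Finset.mem_image.1 hb
      rw [Prod.mk.injEq]
      exact ⟨hab, by rw [hsf i hi, hsf j hj]⟩
    have h2 : (Inn g).card = (s.image (fun i => ((w (i + 1), f (i + 1)) : W × F))).card := by
      have he : Inn g = (s.image (fun i => ((w (i + 1), f (i + 1)) : W × F))).image Prod.fst := by
        rw [Finset.image_image]; rfl
      rw [he]
      apply Finset.card_image_of_injOn
      intro a ha b hb hab
      obtain ⟨i, hi, rfl⟩ := Finset.mem_image.1 ha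
      obtain ⟨j, hj, rfl⟩ := Finset.mem_image.1 hb
      rw [Prod.mk.injEq]
      exact ⟨hab, detF i j (by rw [hsf i hi, hsf j hj]) hab⟩
    rw [h1, h2]
    exact (CARD s hsr).symm
  have hcardOIF : ∀ v, (OutF v).card = (InF v).card := by
    intro v
    set s := (Finset.range r).filter (fun i => w (i + 1) = v) with hs
    have hsr : s ⊆ Finset.range r := Finset.filter_subset _ _
    have hsw : ∀ i ∈ s, w (i + 1) = v := fun i hi => (Finset.mem_filter.1 hi).2
    have h1 : (OutF v).card = (s.image (fun i => ((w (i + 1), f (i + 1)) : W × F))).card := by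
      have he : OutF v = (s.image (fun i => ((w (i + 1), f (i + 1)) : W × F))).image Prod.snd := by
        rw [Finset.image_image]; rfl
      rw [he]
      apply Finset.card_image_of_injOn
      intro a ha b hb hab
      obtain ⟨i, hi, rfl⟩ := Finset.mem_image.1 ha
      obtain ⟨j, hj, rfl⟩ := Finset.mem_image.1 hb
      rw [Prod.mk.injEq]
      exact ⟨by rw [hsw i hi, hsw j hj], hab⟩
    have h2 : (InF v).card = (s.image (fun i => ((w i, f i) : W × F))).card := by
      have he : InF v = (s.image (fun i => ((w i, f i) : W × F))).image Prod.snd := by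
        rw [Finset.image_image]; rfl
      rw [he]
      apply Finset.card_image_of_injOn
      intro a ha b hb hab
      obtain ⟨i, hi, rfl⟩ := Finset.mem_image.1 ha
      obtain ⟨j, hj, rfl⟩ := Finset.mem_image.1 hb
      have hww' : w (i + 1) = w (j + 1) := by rw [hsw i hi, hsw j hj]
      have hff' : f (i + 1) = f (j + 1) := detF i j hab hww'
      exact INJ i j (by rw [Prod.mk.injEq]; exact ⟨hww', hff'⟩)
    rw [h1, h2]
    exact CARD s hsr
  -- the firm-side choice lemma
  have FL1 : ∀ g, (∃ i ∈ Finset.range r, f i = g) →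
      M.Cfred μ μt g (Finset.univ \ Out g) = (μ.fm g \ Out g) ∪ Inn g := by
    intro g hg
    obtain ⟨i0, hi0r, hi0f⟩ := hg
    have hwi0 : w i0 ∈ Out g := by
      simp only [hOut, Finset.mem_image, Finset.mem_filter]
      exact ⟨i0, ⟨hi0r, hi0f⟩, rfl⟩
    have hsubs : (μ.fm g \ Out g) ∪ Inn g ⊆ M.Cfred μ μt g (Finset.univ \ Out g) := by
      intro x hx
      rcases Finset.mem_union.1 hx with hx | hx
      · obtain ⟨hx1, hx2⟩ := Finset.mem_sdiff.1 hx
        have hc := hii i0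
        rw [hi0f] at hc
        have h1 : x ∈ M.Cfred μ μt g (Finset.univ \ {w i0}) := by
          rw [hc]
          refine Finset.mem_insert_of_mem (Finset.mem_sdiff.2 ⟨hx1, ?_⟩)
          simp only [Finset.mem_singleton]
          intro he; exact hx2 (he ▸ hwi0)
        refine choice_mem_of_mem (substred_f M g (hsub.1 g)) h1 ?_ ?_
        · intro y hy
          obtain ⟨hy1, hy2⟩ := Finset.mem_sdiff.1 hy
          refine Finset.mem_sdiff.2 ⟨hy1, ?_⟩
          simp only [Finset.mem_singleton]
          intro he; exact hy2 (he ▸ hwi0)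
        · exact Finset.mem_sdiff.2 ⟨Finset.mem_univ x, hx2⟩
      · have hx' := hx
        simp only [hInn, Finset.mem_image, Finset.mem_filter, Finset.mem_range] at hx'
        obtain ⟨i, ⟨hir, hif⟩, rfl⟩ := hx'
        have hwin : w i ∈ Out g := by
          simp only [hOut, Finset.mem_image, Finset.mem_filter, Finset.mem_range]
          exact ⟨i, ⟨hir, hif⟩, rfl⟩
        have hc := hii i
        rw [hif] at hc
        have h1 : w (i + 1) ∈ M.Cfred μ μt g (Finset.univ \ {w i}) := by
          rw [hc]; exact Finset.mem_insert_self _ _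
        have hnin : w (i + 1) ∉ Out g := by
          intro hcon
          exact hA i (by rw [hif]; exact hOutsub g hcon)
        refine choice_mem_of_mem (substred_f M g (hsub.1 g)) h1 ?_ ?_
        · intro y hy
          obtain ⟨hy1, hy2⟩ := Finset.mem_sdiff.1 hy
          refine Finset.mem_sdiff.2 ⟨hy1, ?_⟩
          simp only [Finset.mem_singleton]
          intro he; exact hy2 (he ▸ hwin)
        · exact Finset.mem_sdiff.2 ⟨Finset.mem_univ _, hnin⟩
    have hle : (M.Cfred μ μt g (Finset.univ \ Out g)).card ≤ ((μ.fm g \ Out g) ∪ Inn g).card := by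
      have h1 := ladred_f (μ := μ) (μt := μt) M g (hlad.1 g) (Finset.univ \ Out g) Finset.univ Finset.sdiff_subset
      rw [F2gen M hsub hμ hμt hgt g Finset.univ (Finset.subset_univ _)] at h1
      have h2 : ((μ.fm g \ Out g) ∪ Inn g).card = (μ.fm g).card := by
        rw [Finset.card_union_of_disjoint (by
          rw [Finset.disjoint_left]
          intro a ha hain
          exact hInnμ g a hain (Finset.mem_sdiff.1 ha).1)]
        rw [Finset.card_sdiff_of_subset (hOutsub g)]
        have h3 := Finset.card_le_card (hOutsub g)
        have h4 := hcardOI g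
        omega
      omega
    exact (Finset.eq_of_subset_of_card_le hsubs hle).symm
  -- shift equivalence and worker-side matching description
  have EQOO : ∀ g v, v ∈ Out g ↔ g ∈ OutF v := by
    intro g v
    simp only [hOut, hOutF, Finset.mem_image, Finset.mem_filter, Finset.mem_range]
    constructor
    · rintro ⟨i, ⟨hir, hfi⟩, hwi⟩
      rcases i with _ | k
      · have h1 : r - 1 + 1 = r := by omega
        have h2 : w r = w 0 := by simpa using hwper 0
        have h3 : f r = f 0 := by simpa using hfper 0
        exact ⟨r - 1, ⟨by omega, by rw [h1, h2]; exact hwi⟩, by rw [h1, h3]; exact hfi⟩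
      · exact ⟨k, ⟨by omega, hwi⟩, hfi⟩
    · rintro ⟨i, ⟨hir, hwi⟩, hfi⟩
      by_cases h : i + 1 < r
      · exact ⟨i + 1, ⟨h, hfi⟩, hwi⟩
      · have hir' : i + 1 = r := by omega
        have h2 : w r = w 0 := by simpa using hwper 0
        have h3 : f r = f 0 := by simpa using hfper 0
        refine ⟨0, ⟨hr, ?_⟩, ?_⟩
        · rw [← h3, ← hir']; exact hfi
        · rw [← h2, ← hir']; exact hwi
  have EQIO : ∀ g v, v ∈ Inn g ↔ g ∈ InF v := by
    intro g v
    simp only [hInn, hInF, Finset.mem_image, Finset.mem_filter, Finset.mem_range]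
    constructor
    · rintro ⟨i, ⟨hir, hfi⟩, hwi⟩; exact ⟨i, ⟨hir, hwi⟩, hfi⟩
    · rintro ⟨i, ⟨hir, hwi⟩, hfi⟩; exact ⟨i, ⟨hir, hfi⟩, hwi⟩
  have CONS : ∀ v, μ'.wm v = (μ.wm v \ OutF v) ∪ InF v := by
    intro v
    ext g
    rw [← μ'.consistent g v]
    by_cases hg : ∃ i ∈ Finset.range r, f i = g
    · rw [hfm1 g hg]
      simp only [Finset.mem_union, Finset.mem_sdiff]
      rw [μ.consistent g v, EQOO g v, EQIO g v]
    · rw [hfm2 g hg]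
      have hgO : g ∉ OutF v := by
        intro hcon
        simp only [hOutF, Finset.mem_image, Finset.mem_filter, Finset.mem_range] at hcon
        obtain ⟨i, ⟨hir, hwi⟩, hfi⟩ := hcon
        exact hg ⟨(i + 1) % r, Finset.mem_range.2 (Nat.mod_lt _ hr), by
          rw [hfmod (i + 1)]; exact hfi⟩
      have hgI : g ∉ InF v := by
        intro hcon
        simp only [hInF, Finset.mem_image, Finset.mem_filter, Finset.mem_range] at hcon
        obtain ⟨i, ⟨hir, hwi⟩, hfi⟩ := hcon
        exact hg ⟨i, Finset.mem_range.2 hir, hfi⟩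
      simp only [Finset.mem_union, Finset.mem_sdiff]
      rw [μ.consistent g v]
      constructor
      · intro h; exact Or.inl ⟨h, hgO⟩
      · rintro (⟨h, -⟩ | h)
        · exact h
        · exact absurd h hgI
  -- the worker-side choice lemma
  have WL1 : ∀ v, M.Cwred μ μt v (μ.wm v ∪ InF v) = (μ.wm v \ OutF v) ∪ InF v := by
    intro v
    have hYsub : M.Cwred μ μt v (μ.wm v ∪ InF v) ⊆ (μ.wm v \ OutF v) ∪ InF v := by
      intro x hx
      have hx1 := Cwred_subset M v _ hx
      by_cases hxI : x ∈ InF v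
      · exact Finset.mem_union_right _ hxI
      · have hxμ : x ∈ μ.wm v := (Finset.mem_union.1 hx1).resolve_right hxI
        refine Finset.mem_union_left _ (Finset.mem_sdiff.2 ⟨hxμ, ?_⟩)
        intro hxO
        simp only [hOutF, Finset.mem_image, Finset.mem_filter, Finset.mem_range] at hxO
        obtain ⟨i, ⟨hir, hwi⟩, rfl⟩ := hxO
        have hc := hiii i
        rw [hwi] at hc
        have hfiI : f i ∈ InF v := by
          simp only [hInF, Finset.mem_image, Finset.mem_filter, Finset.mem_range]
          exact ⟨i, ⟨hir, hwi⟩, rfl⟩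
        have h5 : f (i + 1) ∈ M.Cwred μ μt v (μ.wm v ∪ {f i}) := by
          refine choice_mem_of_mem (substred_w M v (hsub.2 v)) hx ?_ ?_
          · exact Finset.union_subset_union (Finset.Subset.refl _)
              (Finset.singleton_subset_iff.2 hfiI)
          · exact Finset.mem_union_left _ hxμ
        rw [hc] at h5
        rcases Finset.mem_insert.1 h5 with h6 | h6
        · apply hA' i
          rw [hwi, ← h6]
          exact hxμ
        · exact (Finset.mem_sdiff.1 h6).2 (Finset.mem_singleton_self _)
    have hge : (μ.wm v).card ≤ (M.Cwred μ μt v (μ.wm v ∪ InF v)).card := by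
      have h1 := ladred_w (μ := μ) (μt := μt) M v (hlad.2 v) (μ.wm v) (μ.wm v ∪ InF v) Finset.subset_union_left
      rwa [F3red_w M hsub hμ hμt hgt v] at h1
    have hcardT : ((μ.wm v \ OutF v) ∪ InF v).card = (μ.wm v).card := by
      rw [Finset.card_union_of_disjoint (by
        rw [Finset.disjoint_left]
        intro a ha hain
        exact hInFμ v a hain (Finset.mem_sdiff.1 ha).1)]
      rw [Finset.card_sdiff_of_subset (hOutFsub v)]
      have h3 := Finset.card_le_card (hOutFsub v)
      have h4 := hcardOIF v
      omega
    exact Finset.eq_of_subset_of_card_le hYsub (by rw [hcardT]; exact hge)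
  -- assemble stability
  have hIRf : ∀ g, M.Cfred μ μt g (μ'.fm g) = μ'.fm g := by
    intro g
    by_cases hg : ∃ i ∈ Finset.range r, f i = g
    · have h1 := FL1 g hg
      have hsub2 : μ'.fm g ⊆ Finset.univ \ Out g := by
        rw [hfm1 g hg]
        intro x hx
        refine Finset.mem_sdiff.2 ⟨Finset.mem_univ x, ?_⟩
        rcases Finset.mem_union.1 hx with h | h
        · exact (Finset.mem_sdiff.1 h).2
        · intro hcon; exact hInnμ g x h (hOutsub g hcon)
      have h2 : M.Cfred μ μt g (μ'.fm g) = M.Cfred μ μt g (Finset.univ \ Out g) :=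
        Cfred_irc M (by rw [h1, ← hfm1 g hg]) hsub2
      rw [h2, h1, ← hfm1 g hg]
    · rw [hfm2 g hg]
      exact F3red_f M hsub hμ hμt hgt g
  have hIRw : ∀ v, M.Cwred μ μt v (μ'.wm v) = μ'.wm v := by
    intro v
    have h1 := WL1 v
    have hsub2 : μ'.wm v ⊆ μ.wm v ∪ InF v := by
      rw [CONS v]
      exact Finset.union_subset_union Finset.sdiff_subset (Finset.Subset.refl _)
    have h2 : M.Cwred μ μt v (μ'.wm v) = M.Cwred μ μt v (μ.wm v ∪ InF v) :=
      Cwred_irc M (by rw [h1, ← CONS v]) hsub2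
    rw [h2, h1, ← CONS v]
  have hNB : ∀ g v, ¬ M.Blocksred μ μt μ' g v := by
    intro g v hbl
    obtain ⟨hb1, hb2, hb3⟩ := hbl
    by_cases hgv : g ∈ OutF v
    · have hgμ : g ∈ μ.wm v := hOutFsub v hgv
      have hsub2 : insert g (μ'.wm v) ⊆ μ.wm v ∪ InF v :=
        Finset.insert_subset_iff.2 ⟨Finset.mem_union_left _ hgμ, by
          rw [CONS v]
          exact Finset.union_subset_union Finset.sdiff_subset (Finset.Subset.refl _)⟩
      have h2 : M.Cwred μ μt v (insert g (μ'.wm v)) = μ'.wm v := by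
        have h3 := Cwred_irc M (S := μ.wm v ∪ InF v) (T := insert g (μ'.wm v))
          (by rw [WL1 v, ← CONS v]; exact Finset.subset_insert _ _) hsub2
        rw [h3, WL1 v, ← CONS v]
      rw [h2] at hb3
      exact hb1 ((μ'.consistent g v).2 hb3)
    · by_cases hg : ∃ i ∈ Finset.range r, f i = g
      · have hvO : v ∉ Out g := fun hcon => hgv ((EQOO g v).1 hcon)
        have hsub2 : insert v (μ'.fm g) ⊆ Finset.univ \ Out g := by
          refine Finset.insert_subset_iff.2 ⟨Finset.mem_sdiff.2 ⟨Finset.mem_univ v, hvO⟩, ?_⟩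
          rw [hfm1 g hg]
          intro x hx
          refine Finset.mem_sdiff.2 ⟨Finset.mem_univ x, ?_⟩
          rcases Finset.mem_union.1 hx with h | h
          · exact (Finset.mem_sdiff.1 h).2
          · intro hcon; exact hInnμ g x h (hOutsub g hcon)
        have h2 : M.Cfred μ μt g (insert v (μ'.fm g)) = μ'.fm g := by
          have h3 := Cfred_irc M (S := Finset.univ \ Out g) (T := insert v (μ'.fm g))
            (by rw [FL1 g hg, ← hfm1 g hg]; exact Finset.subset_insert _ _) hsub2
          rw [h3, FL1 g hg, ← hfm1 g hg]
        rw [h2] at hb2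
        exact hb1 hb2
      · have h2 : M.Cfred μ μt g (insert v (μ'.fm g)) = μ.fm g := by
          rw [hfm2 g hg]
          exact F2gen M hsub hμ hμt hgt g _ (Finset.subset_insert _ _)
        rw [h2, ← hfm2 g hg] at hb2
        exact hb1 hb2
  exact ⟨⟨hIRf, hIRw⟩, hNB⟩
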